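/- A positive rational number q is not the child (left or right) of any positive rational in any (u,v)-Calkin-Wilf tree if and only if 1/u ≤ q ≤ v. -/

import Mathlib

theorem orphan_characterization (u v : ℕ) (hu : 0 < u) (hv : 0 < v)
    (q : ℚ) (hq : 0 < q) :
    (¬ ∃ w : ℚ, 0 < w ∧ (q = w / (u * w + 1) ∨ q = w + v)) ↔
      (1 / (u : ℚ) ≤ q ∧ q ≤ v) := by
  have hu' : (0 : ℚ) < u := by exact_mod_cast hu
  have hv' : (0 : ℚ) < v := by exact_mod_cast hv
  constructor
  · intro h
    constructor
    · by_contra hlt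
      push_neg at hlt
      have huq : u * q < 1 := by
        have := (lt_div_iff₀ hu').mp hlt
        linarith
      have hden : (0 : ℚ) < 1 - u * q := by linarith
      refine h ⟨q / (1 - u * q), div_pos hq hden, Or.inl ?_⟩
      rw [eq_div_iff (by positivity : ((u:ℚ) * (q / (1 - u * q)) + 1) ≠ 0)]
      field_simp
      rw [div_add_one (by linarith : (0:ℚ) < 1 - q * u).ne']
      ring
    · by_contra hlt
      push_neg at hlt
      exact h ⟨q - v, by linarith, Or.inr (by ring)⟩
  · rintro ⟨h1, h2⟩ ⟨w, hw, hcase | hcase⟩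
    · have hden : (0 : ℚ) < (u : ℚ) * w + 1 := by positivity
      have : q < 1 / u := by
        rw [hcase, div_lt_div_iff₀ hden hu']
        nlinarith
      linarith
    · linarith [hcase ▸ h2]
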